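/- Let f : ℝⁿ → ℝ be convex and L-smooth. Then ∇f is (1/L)-cocoercive: for all x, y, (∇f(x) − ∇f(y))ᵀ(x − y) ≥ (1/L)‖∇f(x) − ∇f(y)‖². -/

import Mathlib

open InnerProductSpace

private lemma bh_line_deriv {n : ℕ} (f : EuclideanSpace ℝ (Fin n) → ℝ)
    (f' : EuclideanSpace ℝ (Fin n) → EuclideanSpace ℝ (Fin n))
    (hgrad : ∀ x, HasGradientAt f (f' x) x)
    (a v : EuclideanSpace ℝ (Fin n)) (t : ℝ) :
    HasDerivAt (fun s : ℝ => f (a + s • v)) (inner ℝ (f' (a + t • v)) v : ℝ) t := by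
  have hc : HasDerivAt (fun s : ℝ => a + s • v) v t := by
    simpa using ((hasDerivAt_id t).smul_const v).const_add a
  have := (hgrad (a + t • v)).hasFDerivAt.comp_hasDerivAt t hc
  simp [InnerProductSpace.toDual_apply_apply] at this
  exact this

/-- Descent lemma for `L`-smooth functions. -/
private lemma bh_descent {n : ℕ} (L : ℝ) (hL : 0 < L)
    (f : EuclideanSpace ℝ (Fin n) → ℝ)
    (f' : EuclideanSpace ℝ (Fin n) → EuclideanSpace ℝ (Fin n))
    (hgrad : ∀ x, HasGradientAt f (f' x) x)
    (hlip : ∀ x y, ‖f' x - f' y‖ ≤ L * ‖x - y‖)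
    (a b : EuclideanSpace ℝ (Fin n)) :
    f b ≤ f a + (inner ℝ (f' a) (b - a) : ℝ) + L / 2 * ‖b - a‖ ^ 2 := by
  set v := b - a with hv
  set c1 : ℝ := inner ℝ (f' a) v with hc1
  set c2 : ℝ := L / 2 * ‖v‖ ^ 2 with hc2
  set g : ℝ → ℝ := fun t => f (a + t • v) - t * c1 - t ^ 2 * c2 with hg
  have hgd : ∀ t : ℝ, HasDerivAt g
      ((inner ℝ (f' (a + t • v)) v : ℝ) - c1 - 2 * t * c2) t := by
    intro t
    have h1 := bh_line_deriv f f' hgrad a v t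
    have h2 : HasDerivAt (fun s : ℝ => s * c1) c1 t := by
      simpa using (hasDerivAt_id t).mul_const c1
    have h3 : HasDerivAt (fun s : ℝ => s ^ 2 * c2) (2 * t * c2) t := by
      simpa [mul_comm] using (hasDerivAt_pow 2 t).mul_const c2
    exact (h1.sub h2).sub h3
  have hmono : AntitoneOn g (Set.Icc (0:ℝ) 1) := by
    apply antitoneOn_of_deriv_nonpos (convex_Icc 0 1)
    · have : Differentiable ℝ g := fun t => (hgd t).differentiableAt
      exact this.continuous.continuousOn
    · intro t ht
      exact (hgd t).differentiableAt.differentiableWithinAt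
    · intro t ht
      rw [interior_Icc] at ht
      rw [(hgd t).deriv]
      have hb1 : (inner ℝ (f' (a + t • v)) v : ℝ) - c1
          = inner ℝ (f' (a + t • v) - f' a) v := by
        rw [inner_sub_left, hc1]
      have hb2 : (inner ℝ (f' (a + t • v) - f' a) v : ℝ) ≤ L * t * ‖v‖ ^ 2 := by
        calc (inner ℝ (f' (a + t • v) - f' a) v : ℝ)
            ≤ ‖f' (a + t • v) - f' a‖ * ‖v‖ := real_inner_le_norm _ _
          _ ≤ (L * ‖(a + t • v) - a‖) * ‖v‖ := by
              have := hlip (a + t • v) a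
              exact mul_le_mul_of_nonneg_right this (norm_nonneg _)
          _ = L * t * ‖v‖ ^ 2 := by
              rw [add_sub_cancel_left, norm_smul, Real.norm_eq_abs,
                abs_of_pos ht.1]
              ring
      have : 2 * t * c2 = L * t * ‖v‖ ^ 2 := by rw [hc2]; ring
      linarith [hb1 ▸ hb2]
  have h01 : g 1 ≤ g 0 :=
    hmono (by norm_num) (by norm_num) (by norm_num)
  have hg0 : g 0 = f a := by simp [hg]
  have hg1 : g 1 = f b - c1 - c2 := by simp [hg, hv]
  rw [hg0, hg1] at h01
  simp only [hc1, hc2, hv] at h01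
  linarith

/-- First-order condition for convex differentiable functions. -/
private lemma bh_firstorder {n : ℕ} (f : EuclideanSpace ℝ (Fin n) → ℝ)
    (f' : EuclideanSpace ℝ (Fin n) → EuclideanSpace ℝ (Fin n))
    (hgrad : ∀ x, HasGradientAt f (f' x) x)
    (hconv : ConvexOn ℝ Set.univ f)
    (a b : EuclideanSpace ℝ (Fin n)) :
    f a + (inner ℝ (f' a) (b - a) : ℝ) ≤ f b := by
  set g : ℝ → ℝ := fun t => f (a + t • (b - a)) with hg
  have hgc : ConvexOn ℝ (Set.univ : Set ℝ) g := by
    have := hconv.comp_affineMap (AffineMap.lineMap a b)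
    have heq : (f ∘ (AffineMap.lineMap a b)) = g := by
      funext t
      simp [hg, AffineMap.lineMap_apply, add_comm]
    rw [heq] at this
    simpa using this
  have hd : HasDerivAt g (inner ℝ (f' a) (b - a) : ℝ) 0 := by
    have := bh_line_deriv f f' hgrad a (b - a) 0
    simpa using this
  have := hgc.le_slope_of_hasDerivAt (Set.mem_univ (0:ℝ)) (Set.mem_univ (1:ℝ))
    (by norm_num) hd
  have hslope : slope g 0 1 = g 1 - g 0 := by
    simp [slope_def_field]
  rw [hslope] at this
  have hg0 : g 0 = f a := by simp [hg]
  have hg1 : g 1 = f b := by simp [hg]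
  rw [hg0, hg1] at this
  linarith

/-- Key inequality: quadratic lower bound from smoothness + convexity. -/
private lemma bh_key {n : ℕ} (L : ℝ) (hL : 0 < L)
    (f : EuclideanSpace ℝ (Fin n) → ℝ)
    (f' : EuclideanSpace ℝ (Fin n) → EuclideanSpace ℝ (Fin n))
    (hgrad : ∀ x, HasGradientAt f (f' x) x)
    (hconv : ConvexOn ℝ Set.univ f)
    (hlip : ∀ x y, ‖f' x - f' y‖ ≤ L * ‖x - y‖)
    (a b : EuclideanSpace ℝ (Fin n)) :
    f a + (inner ℝ (f' a) (b - a) : ℝ) + 1 / (2 * L) * ‖f' b - f' a‖ ^ 2 ≤ f b := by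
  set d := f' b - f' a with hd
  set z := b - (1 / L) • d with hz
  have h1 := bh_firstorder f f' hgrad hconv a z
  have h2 := bh_descent L hL f f' hgrad hlip b z
  have hzb : z - b = -((1 / L) • d) := by rw [hz]; abel
  have hza : z - a = (b - a) - (1 / L) • d := by rw [hz]; abel
  have e1 : (inner ℝ (f' b) (z - b) : ℝ) = -(1 / L) * inner ℝ (f' b) d := by
    rw [hzb, inner_neg_right, inner_smul_right]; ring
  have e2 : ‖z - b‖ ^ 2 = (1 / L) ^ 2 * ‖d‖ ^ 2 := by
    rw [hzb, norm_neg, norm_smul, Real.norm_eq_abs, mul_pow, sq_abs]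
  have e3 : (inner ℝ (f' a) (z - a) : ℝ)
      = inner ℝ (f' a) (b - a) - (1 / L) * inner ℝ (f' a) d := by
    rw [hza, inner_sub_right, inner_smul_right]
  have e4 : (inner ℝ (f' b) d : ℝ) - inner ℝ (f' a) d = ‖d‖ ^ 2 := by
    rw [← inner_sub_left, ← hd, real_inner_self_eq_norm_sq]
  rw [e1, e2] at h2
  rw [e3] at h1
  have hL' : L ≠ 0 := ne_of_gt hL
  have key : (1 / L) * ((inner ℝ (f' b) d : ℝ) - inner ℝ (f' a) d)
      - L / 2 * ((1 / L) ^ 2 * ‖d‖ ^ 2) = 1 / (2 * L) * ‖d‖ ^ 2 := by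
    rw [e4]; field_simp; ring
  nlinarith [h1, h2]

/-- Baillon–Haddad: for convex `L`-smooth `f`, the gradient is
`(1/L)`-cocoercive. -/
theorem stmt13 {n : ℕ} (L : ℝ) (hL : 0 < L)
    (f : EuclideanSpace ℝ (Fin n) → ℝ)
    (f' : EuclideanSpace ℝ (Fin n) → EuclideanSpace ℝ (Fin n))
    (hgrad : ∀ x, HasGradientAt f (f' x) x)
    (hconv : ConvexOn ℝ Set.univ f)
    (hlip : ∀ x y, ‖f' x - f' y‖ ≤ L * ‖x - y‖) :
    ∀ x y, (1 / L) * ‖f' x - f' y‖ ^ 2 ≤ (inner ℝ (f' x - f' y) (x - y) : ℝ) := by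
  intro x y
  have h1 := bh_key L hL f f' hgrad hconv hlip x y
  have h2 := bh_key L hL f f' hgrad hconv hlip y x
  have hnorm : ‖f' y - f' x‖ = ‖f' x - f' y‖ := norm_sub_rev _ _
  rw [hnorm] at h1
  have e1 : (inner ℝ (f' x - f' y) (x - y) : ℝ)
      = inner ℝ (f' x) (x - y) - inner ℝ (f' y) (x - y) := by rw [inner_sub_left]
  have e2 : (inner ℝ (f' x) (y - x) : ℝ) = - inner ℝ (f' x) (x - y) := by
    rw [← inner_neg_right]; congr 1; abel
  have e3 : (inner ℝ (f' y) (x - y) : ℝ) = inner ℝ (f' y) (x - y) := rfl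
  rw [e2] at h1
  have hLL : 1 / L = 1 / (2 * L) + 1 / (2 * L) := by field_simp; ring
  rw [e1, hLL]
  linarith
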